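/- Let g, u, h₋, Γ, η be as follows: g = q², u = (q')² − tg − g² for q a nonvanishing twice-differentiable solution of q'' = 2q³ + tq with u nonvanishing; h₋ twice differentiable satisfying 9h₋'' + 9(h₋ + g/u)h₋' + h₋³ + 3(g/u)h₋² − (3g'/u + 12g + 4t)h₋ − 8g' − 6g²/u = 0; Γ = g/u − u and η = h₋ + g/u. Then 9η'' + 9ηη' + η³ − 4(3Γ' + t)η − 8Γ'' − 2 = 0. -/

import Mathlib

/-- `g = q²` for a nonvanishing Painlevé II solution `q`. -/
def PIIg (q : ℝ → ℝ) : ℝ → ℝ := fun t => q t ^ 2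

/-- The Painlevé II Hamiltonian `u = (q')² - tq² - q⁴` (with `q'` an explicit
derivative function). -/
def PIIu (q q' : ℝ → ℝ) : ℝ → ℝ := fun t => q' t ^ 2 - t * q t ^ 2 - q t ^ 4

/-- Passage from equation (4.25) for `h₋` to the simplest form (4.28)=(1.14)
of the second-order ODE: with `Γ = g/u - u` and `η = h₋ + g/u`,
`9η'' + 9ηη' + η³ - 4(3Γ' + t)η - 8Γ'' - 2 = 0`. -/
theorem stmt_14 (q q' q'' hm : ℝ → ℝ)
    (hq : ∀ t, HasDerivAt q (q' t) t)
    (hq' : ∀ t, HasDerivAt q' (q'' t) t)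
    (hPII : ∀ t, q'' t = 2 * q t ^ 3 + t * q t)
    (hqne : ∀ t, q t ≠ 0)
    (hune : ∀ t, PIIu q q' t ≠ 0)
    (hmd : Differentiable ℝ hm) (hm2 : Differentiable ℝ (deriv hm))
    (hODE : ∀ t, 9 * deriv (deriv hm) t
      + 9 * (hm t + PIIg q t / PIIu q q' t) * deriv hm t
      + hm t ^ 3 + 3 * (PIIg q t / PIIu q q' t) * hm t ^ 2
      - (3 * deriv (PIIg q) t / PIIu q q' t + 12 * PIIg q t + 4 * t) * hm t
      - 8 * deriv (PIIg q) t - 6 * (PIIg q t) ^ 2 / PIIu q q' t = 0) :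
    ∀ t, 9 * deriv (deriv (fun s => hm s + PIIg q s / PIIu q q' s)) t
      + 9 * (hm t + PIIg q t / PIIu q q' t)
          * deriv (fun s => hm s + PIIg q s / PIIu q q' s) t
      + (hm t + PIIg q t / PIIu q q' t) ^ 3
      - 4 * (3 * deriv (fun s => PIIg q s / PIIu q q' s - PIIu q q' s) t + t)
          * (hm t + PIIg q t / PIIu q q' t)
      - 8 * deriv (deriv (fun s => PIIg q s / PIIu q q' s - PIIu q q' s)) t
      - 2 = 0 := by
  -- derivative of g = q²
  have hG : ∀ s, HasDerivAt (PIIg q) (2 * q s * q' s) s := by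
    intro s
    have := (hq s).fun_pow 2
    show HasDerivAt (fun t => q t ^ 2) _ s
    simpa [PIIg, mul_comm, mul_assoc, mul_left_comm] using this
  -- derivative of u is -q²
  have hU : ∀ s, HasDerivAt (PIIu q q') (-(q s ^ 2)) s := by
    intro s
    have h1 : HasDerivAt (fun x => q' x ^ 2 - x * q x ^ 2 - q x ^ 4)
        (2 * q' s ^ 1 * q'' s - (1 * q s ^ 2 + s * (2 * q s ^ 1 * q' s))
          - 4 * q s ^ 3 * q' s) s := by
      exact (((hq' s).pow 2).sub (((hasDerivAt_id s).mul ((hq s).pow 2)))).sub ((hq s).pow 4)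
    have h2 : (2 * q' s ^ 1 * q'' s - (1 * q s ^ 2 + s * (2 * q s ^ 1 * q' s))
          - 4 * q s ^ 3 * q' s) = -(q s ^ 2) := by
      rw [hPII s]; ring
    rw [h2] at h1
    exact h1
  -- first derivative of r = g/u
  set U := PIIu q q' with hUdef
  set G := PIIg q with hGdef
  have hNum : ∀ s, G s = q s ^ 2 := fun s => rfl
  -- D1 = derivative of G/U
  set D1 : ℝ → ℝ := fun s =>
    (2 * q s * q' s * U s - G s * (-(q s ^ 2))) / U s ^ 2 with hD1def
  have hr : ∀ s, HasDerivAt (fun x => G x / U x) (D1 s) s := by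
    intro s
    exact (hG s).div (hU s) (hune s)
  have hderivr : deriv (fun x => G x / U x) = D1 := funext fun s => (hr s).deriv
  -- second derivative of G/U : D1 = N / U²  with N = 2qq'U + q⁴ (as G*q² = q⁴)
  have hD1' : ∀ s, HasDerivAt D1
      (((2 * (q' s * q' s + q s * q'' s) * U s + 2 * q s * q' s * (-(q s ^ 2))
          - ((2 * q s * q' s) * (-(q s ^ 2)) + G s * (-(2 * q s * q' s)))) * U s ^ 2
        - (2 * q s * q' s * U s - G s * (-(q s ^ 2))) * (2 * U s ^ 1 * (-(q s ^ 2))))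
        / (U s ^ 2) ^ 2) s := by
    intro s
    have hN : HasDerivAt (fun x => 2 * q x * q' x * U x - G x * (-(q x ^ 2)))
        (2 * (q' s * q' s + q s * q'' s) * U s + 2 * q s * q' s * (-(q s ^ 2))
          - ((2 * q s * q' s) * (-(q s ^ 2)) + G s * (-(2 * q s * q' s)))) s := by
      have ha : HasDerivAt (fun x => 2 * q x * q' x)
          (2 * (q' s * q' s + q s * q'' s)) s := by
        have := ((hq s).mul (hq' s)).const_mul 2
        simpa [mul_comm, mul_assoc, mul_left_comm, mul_add] using this
      have hb : HasDerivAt (fun x => -(q x ^ 2)) (-(2 * q s * q' s)) s := by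
        have := ((hq s).fun_pow 2).fun_neg
        simpa [mul_comm, mul_assoc, mul_left_comm] using this
      exact (ha.mul (hU s)).sub ((hG s).mul hb)
    have hD : HasDerivAt (fun x => U x ^ 2) (2 * U s ^ 1 * (-(q s ^ 2))) s :=
      (hU s).pow 2
    exact hN.div hD (pow_ne_zero 2 (hune s))
  -- derivative of η = hm + G/U
  have hη : deriv (fun s => hm s + G s / U s) = fun s => deriv hm s + D1 s := by
    funext s
    exact (((hmd s).hasDerivAt).add (hr s)).deriv
  -- derivative of Γ = G/U - U
  have hΓ : deriv (fun s => G s / U s - U s) = fun s => D1 s + q s ^ 2 := by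
    funext s
    have := (hr s).fun_sub (hU s)
    simpa [sub_neg_eq_add] using this.deriv
  intro t
  rw [hη, hΓ]
  have hη2 : deriv (fun s => deriv hm s + D1 s) t
      = deriv (deriv hm) t + deriv D1 t := by
    exact (((hm2 t).hasDerivAt).add ((hD1' t).differentiableAt.hasDerivAt)).deriv
  have hΓ2 : deriv (fun s => D1 s + q s ^ 2) t
      = deriv D1 t + 2 * q t * q' t := by
    have h2 : HasDerivAt (fun s => q s ^ 2) (2 * q t * q' t) t := by
      have := (hq t).fun_pow 2
      simpa [mul_comm, mul_assoc, mul_left_comm] using this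
    exact (((hD1' t).differentiableAt.hasDerivAt).add h2).deriv
  have hD1nice : ∀ s, D1 s = 2 * q s * q' s / U s + q s ^ 4 / U s ^ 2 := by
    intro s
    rw [hD1def]
    have hu := hune s
    field_simp [hNum]
    simp only [hNum]
    ring
  have hu := hune t
  have hUval : U t = q' t ^ 2 - t * q t ^ 2 - q t ^ 4 := rfl
  have hD2 : deriv D1 t = 3 * q t ^ 2 * (2 * q t * q' t) / U t ^ 2
      + 2 * q t ^ 6 / U t ^ 3 + 6 * q t ^ 4 / U t + 4 * t * q t ^ 2 / U t + 2 := by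
    rw [(hD1' t).deriv, hNum, hPII t, hUval]
    have h0 : q' t ^ 2 - t * q t ^ 2 - q t ^ 4 ≠ 0 := hUval ▸ hu
    have h0' : q' t ^ 2 - q t ^ 2 * t - q t ^ 4 ≠ 0 := by rwa [mul_comm (t)] at h0
    field_simp
    ring
  rw [hη2, hΓ2, hD2]
  simp only [hD1nice, hNum]
  have h := hODE t
  rw [(hG t).deriv] at h
  simp only [hNum] at h
  linear_combination h
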